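/- arXiv:2512.05676 — 2 statements merged into one kernel-verified Lean document; each statement's English description precedes it below -/
import Mathlib

section
/- For all d ∈ (0, π/2), α ≥ 1, λ ≥ 1, and for all z on the boundary curve of the region D_d = {w ∈ ℂ : |arg(w + √(1+w²))| < d} (parametrized by z = sinh(x ± i d), x ∈ ℝ), it holds that λ / |α + i z + λ|² ≤ λ⁻¹ / cos(d)². -/
open Complex

lemma boundary_aux (S C c α lam : ℝ) (hC : 0 < C) (hS1 : S ≤ 1)
    (hp : S^2 + C^2 = 1) (hc : 1 ≤ c) (hα : 1 ≤ α) (hlam : 1 ≤ lam) :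
    lam^2 * C^2 ≤ (α + lam - c*S)^2 + (c^2 - 1) * C^2 := by
  rcases le_or_gt (S*c) (1+lam) with h2 | h2
  · nlinarith [sq_nonneg (c - S*(1+lam)), sq_nonneg (α - 1),
      mul_nonneg (by linarith : (0:ℝ) ≤ α - 1) (by linarith : (0:ℝ) ≤ 1 + lam - S*c),
      mul_nonneg (by linarith : (0:ℝ) ≤ lam) (sq_nonneg C)]
  · have hc2 : 1 + lam < c := by nlinarith [mul_nonneg (by linarith : (0:ℝ) ≤ c) (by linarith : (0:ℝ) ≤ 1 - S)]
    nlinarith [sq_nonneg (α + lam - S*c),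
      mul_nonneg (sq_nonneg C) (by nlinarith : (0:ℝ) ≤ c^2 - 1 - lam^2)]

theorem boundary_sup_estimate (d α lam : ℝ) (hd0 : 0 < d) (hd : d < Real.pi / 2)
    (hα : 1 ≤ α) (hlam : 1 ≤ lam) (x : ℝ) (s : ℝ) (hs : s = 1 ∨ s = -1) :
    lam / ‖(α : ℂ) + Complex.I * Complex.sinh ((x : ℂ) + s * Complex.I * d) + lam‖ ^ 2
      ≤ lam⁻¹ / Real.cos d ^ 2 := by
  have hC : 0 < Real.cos d := Real.cos_pos_of_mem_Ioo ⟨by linarith [Real.pi_pos], hd⟩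
  have hS : 0 < Real.sin d := Real.sin_pos_of_pos_of_lt_pi hd0 (by linarith [Real.pi_pos])
  have hc : 1 ≤ Real.cosh x := Real.one_le_cosh x
  have hsh : Real.sinh x ^ 2 = Real.cosh x ^ 2 - 1 := by
    have := Real.cosh_sq_sub_sinh_sq x; nlinarith
  have hlam0 : 0 < lam := by linarith
  set A := α + lam - Real.cosh x * Real.sin (s*d) with hA
  set B := Real.sinh x * Real.cos (s*d) with hB
  have habs : ‖(α : ℂ) + Complex.I * Complex.sinh ((x : ℂ) + s * Complex.I * d) + lam‖ ^ 2
      = A^2 + B^2 := by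
    have hz : (s:ℂ) * Complex.I * (d:ℂ) = ((s*d : ℝ):ℂ) * Complex.I := by push_cast; ring
    have hsinh : Complex.sinh ((x:ℂ) + ((s*d : ℝ):ℂ)*Complex.I) =
        ((Real.sinh x * Real.cos (s*d) : ℝ):ℂ) + ((Real.cosh x * Real.sin (s*d) : ℝ):ℂ) * Complex.I := by
      rw [Complex.sinh_add, Complex.sinh_mul_I, Complex.cosh_mul_I]
      push_cast [Complex.ofReal_sinh, Complex.ofReal_cosh]
      ring
    have heq : (α : ℂ) + Complex.I * Complex.sinh ((x : ℂ) + s * Complex.I * d) + lam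
        = ((A:ℝ):ℂ) + ((B:ℝ):ℂ) * Complex.I := by
      rw [hz, hsinh, hA, hB]
      push_cast [Complex.ofReal_sinh, Complex.ofReal_cosh]
      linear_combination (Complex.cosh (x:ℂ) * Complex.sin ((s:ℂ)*(d:ℂ))) * Complex.I_sq
    rw [heq, Complex.sq_norm, Complex.normSq_add_mul_I]
  rw [habs]
  have key : lam^2 * Real.cos d ^2 ≤ A^2 + B^2 := by
    have hB2 : B^2 = (Real.cosh x^2 - 1) * Real.cos (s*d)^2 := by rw [hB]; rw [mul_pow, hsh]
    rcases hs with h | h <;> subst h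
    · have := boundary_aux (Real.sin d) (Real.cos d) (Real.cosh x) α lam hC
        (Real.sin_le_one d) (Real.sin_sq_add_cos_sq d) hc hα hlam
      rw [hA]
      simp only [one_mul] at hB2 ⊢
      rw [hB2]
      linarith [this]
    · have := boundary_aux (-Real.sin d) (Real.cos d) (Real.cosh x) α lam hC
        (by linarith [Real.sin_le_one d] : -Real.sin d ≤ 1)
        (by have := Real.sin_sq_add_cos_sq d; nlinarith) hc hα hlam
      rw [hA]
      simp only [neg_one_mul, Real.sin_neg, Real.cos_neg] at hB2 ⊢
      rw [hB2]
      linarith [this]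
  have hM : 0 < A^2 + B^2 := by
    nlinarith [mul_pos (mul_pos hlam0 hlam0) (mul_pos hC hC)]
  rw [div_le_div_iff₀ hM (by positivity)]
  calc lam * Real.cos d ^ 2 = lam⁻¹ * (lam^2 * Real.cos d ^2) := by field_simp
    _ ≤ lam⁻¹ * (A^2 + B^2) := mul_le_mul_of_nonneg_left key (by positivity)
end

section
/- For all d ∈ (0, π/2), α ≥ 1, and λ ≥ 1, the contour integral Θ_{α,λ} = ∫_{∂D_d} |dz| / |α + i z + λ|², with ∂D_d parametrized by z = sinh(x ± i d), x ∈ ℝ, satisfies Θ_{α,λ} ≤ C λ⁻¹ / cos(d)^{3/2} for a constant C independent of α, λ, d. -/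
open Complex MeasureTheory

namespace ContourEstimateAux

open Real Filter Set Topology

noncomputable def Faux (M B : ℝ) (x : ℝ) : ℝ :=
  Real.arctan ((Real.cosh x - M) / Real.sqrt B) / Real.sqrt B

lemma hasDerivAt_Faux {B : ℝ} (hB : 0 < B) (M x : ℝ) :
    HasDerivAt (Faux M B) (Real.sinh x / ((Real.cosh x - M) ^ 2 + B)) x := by
  have hs : Real.sqrt B ^ 2 = B := Real.sq_sqrt hB.le
  have hs0 : (0:ℝ) < Real.sqrt B := Real.sqrt_pos.2 hB
  have h1 : HasDerivAt (fun x => (Real.cosh x - M) / Real.sqrt B)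
      (Real.sinh x / Real.sqrt B) x :=
    ((Real.hasDerivAt_cosh x).sub_const M).div_const _
  have h2 := (Real.hasDerivAt_arctan ((Real.cosh x - M) / Real.sqrt B)).comp x h1
  have h3 := h2.div_const (Real.sqrt B)
  refine h3.congr_deriv ?_
  have hQ : 0 < (Real.cosh x - M) ^ 2 + B := by positivity
  rw [div_pow, hs]
  field_simp
  rw [hs]
  ring

lemma Faux_tendsto {B : ℝ} (hB : 0 < B) (M : ℝ) :
    Tendsto (Faux M B) atTop (𝓝 (π / 2 / Real.sqrt B)) := by
  have hs0 : (0:ℝ) < Real.sqrt B := Real.sqrt_pos.2 hB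
  have hcosh : Tendsto Real.cosh atTop atTop := by
    apply tendsto_atTop_mono (fun x => ?_) (tendsto_exp_atTop.atTop_div_const two_pos)
    rw [Real.cosh_eq]
    have := (Real.exp_pos (-x)).le
    linarith
  have h1 : Tendsto (fun x => (Real.cosh x - M) / Real.sqrt B) atTop atTop :=
    (tendsto_atTop_add_const_right _ (-M) hcosh |>.congr (fun x => by ring)).atTop_div_const hs0
  exact ((Real.tendsto_arctan_atTop.mono_right nhdsWithin_le_nhds).comp h1).div_const _

lemma sinh_part {B : ℝ} (hB : 0 < B) (M : ℝ) :
    IntegrableOn (fun x => Real.sinh x / ((Real.cosh x - M) ^ 2 + B)) (Ioi 0) ∧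
    ∫ x in Ioi (0:ℝ), Real.sinh x / ((Real.cosh x - M) ^ 2 + B) ≤ π / Real.sqrt B := by
  have hs0 : (0:ℝ) < Real.sqrt B := Real.sqrt_pos.2 hB
  have hcont : ContinuousWithinAt (Faux M B) (Ici 0) 0 :=
    (hasDerivAt_Faux hB M 0).continuousAt.continuousWithinAt
  have hderiv : ∀ x ∈ Ioi (0:ℝ),
      HasDerivAt (Faux M B) (Real.sinh x / ((Real.cosh x - M) ^ 2 + B)) x :=
    fun x _ => hasDerivAt_Faux hB M x
  have hpos : ∀ x ∈ Ioi (0:ℝ), 0 ≤ Real.sinh x / ((Real.cosh x - M) ^ 2 + B) := by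
    intro x hx
    have h1 : 0 ≤ Real.sinh x := (Real.sinh_pos_iff.2 hx).le
    have h2 : 0 < (Real.cosh x - M) ^ 2 + B := by positivity
    positivity
  have htop := Faux_tendsto hB M
  refine ⟨integrableOn_Ioi_deriv_of_nonneg hcont hderiv hpos htop, ?_⟩
  rw [integral_Ioi_of_hasDerivAt_of_nonneg hcont hderiv hpos htop]
  have harc : -(π/2) < Real.arctan ((Real.cosh 0 - M) / Real.sqrt B) :=
    Real.neg_pi_div_two_lt_arctan _
  have h0 : -(π/2)/Real.sqrt B ≤ Faux M B 0 := by
    unfold Faux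
    gcongr
  calc π/2/Real.sqrt B - Faux M B 0 ≤ π/2/Real.sqrt B - (-(π/2)/Real.sqrt B) := by linarith
    _ = π/Real.sqrt B := by ring

lemma cont_aux {B : ℝ} (hB : 0 < B) (M c : ℝ) :
    Continuous (fun x => (c / Real.cosh x) / ((Real.cosh x - M) ^ 2 + B)) := by
  apply Continuous.div
  · exact continuous_const.div Real.continuous_cosh (fun x => (Real.cosh_pos x).ne')
  · fun_prop
  · intro x
    have : 0 < (Real.cosh x - M) ^ 2 + B := by positivity
    exact this.ne'

lemma sech_part {B c : ℝ} (hB : 0 < B) (hc : 0 ≤ c) (M : ℝ) :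
    IntegrableOn (fun x => (c / Real.cosh x) / ((Real.cosh x - M) ^ 2 + B)) (Ioi 0) ∧
    ∫ x in Ioi (0:ℝ), (c / Real.cosh x) / ((Real.cosh x - M) ^ 2 + B) ≤ 2 * c / B := by
  have hbound : ∀ x : ℝ, (c / Real.cosh x) / ((Real.cosh x - M) ^ 2 + B)
      ≤ (2 * c / B) * Real.exp (-x) := by
    intro x
    have hch : 0 < Real.cosh x := Real.cosh_pos x
    have hQ : 0 < (Real.cosh x - M) ^ 2 + B := by positivity
    have hex : Real.exp x / 2 ≤ Real.cosh x := by
      rw [Real.cosh_eq]; have := (Real.exp_pos (-x)).le; linarith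
    have h1 : (c / Real.cosh x) / ((Real.cosh x - M) ^ 2 + B) ≤ (c / Real.cosh x) / B := by
      gcongr
      linarith [sq_nonneg (Real.cosh x - M)]
    refine h1.trans ?_
    rw [div_div, div_le_iff₀ (by positivity)]
    have hel : 0 < Real.exp x := Real.exp_pos x
    have hinv : Real.exp (-x) = (Real.exp x)⁻¹ := Real.exp_neg x
    rw [hinv]
    have key : c * Real.exp x ≤ 2 * c * Real.cosh x := by nlinarith
    have heq : 2 * c / B * (Real.exp x)⁻¹ * (Real.cosh x * B)
        = (2 * c * Real.cosh x) / Real.exp x := by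
      field_simp
    rw [heq, le_div_iff₀ hel]
    linarith [key]
  have hgint : IntegrableOn (fun x => (2 * c / B) * Real.exp (-x)) (Ioi 0) := by
    have := (exp_neg_integrableOn_Ioi 0 (one_pos)).const_mul (2 * c / B)
    simpa [IntegrableOn] using this
  have hint : IntegrableOn (fun x => (c / Real.cosh x) / ((Real.cosh x - M) ^ 2 + B)) (Ioi 0) := by
    apply Integrable.mono' hgint ((cont_aux hB M c).aestronglyMeasurable)
    filter_upwards with x
    rw [Real.norm_eq_abs, _root_.abs_of_nonneg (by positivity)]
    exact hbound x
  refine ⟨hint, ?_⟩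
  calc ∫ x in Ioi (0:ℝ), (c / Real.cosh x) / ((Real.cosh x - M) ^ 2 + B)
      ≤ ∫ x in Ioi (0:ℝ), (2 * c / B) * Real.exp (-x) :=
        setIntegral_mono_on hint hgint measurableSet_Ioi (fun x _ => hbound x)
    _ = (2 * c / B) * ∫ x in Ioi (0:ℝ), Real.exp (-x) := by rw [MeasureTheory.integral_const_mul]
    _ = 2 * c / B := by rw [integral_exp_neg_Ioi_zero, mul_one]

lemma branch_est {B c : ℝ} (hB : 0 < B) (hc : 0 ≤ c) (M : ℝ) :
    Integrable (fun x : ℝ => (|Real.sinh x| + c / Real.cosh x) / ((Real.cosh x - M) ^ 2 + B)) ∧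
    ∫ x : ℝ, (|Real.sinh x| + c / Real.cosh x) / ((Real.cosh x - M) ^ 2 + B)
      ≤ 2 * (π / Real.sqrt B + 2 * c / B) := by
  set χ : ℝ → ℝ := fun u => (Real.sinh u + c / Real.cosh u) / ((Real.cosh u - M) ^ 2 + B) with hχ
  have hsplit : ∀ u : ℝ, χ u = Real.sinh u / ((Real.cosh u - M) ^ 2 + B)
      + (c / Real.cosh u) / ((Real.cosh u - M) ^ 2 + B) := fun u => add_div _ _ _
  have hint1 := sinh_part hB M
  have hint2 := sech_part hB hc M
  have hχint : IntegrableOn χ (Ioi 0) := by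
    rw [show χ = fun u => Real.sinh u / ((Real.cosh u - M) ^ 2 + B)
      + (c / Real.cosh u) / ((Real.cosh u - M) ^ 2 + B) from funext hsplit]
    exact hint1.1.add hint2.1
  have hχval : ∫ u in Ioi (0:ℝ), χ u ≤ π / Real.sqrt B + 2 * c / B := by
    rw [show χ = fun u => Real.sinh u / ((Real.cosh u - M) ^ 2 + B)
      + (c / Real.cosh u) / ((Real.cosh u - M) ^ 2 + B) from funext hsplit]
    rw [integral_add hint1.1 hint2.1]
    exact add_le_add hint1.2 hint2.2
  have habs : ∀ x : ℝ, (|Real.sinh x| + c / Real.cosh x) / ((Real.cosh x - M) ^ 2 + B)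
      = χ |x| := by
    intro x
    simp only [hχ, Real.cosh_abs, ← Real.abs_sinh]
  have hfun : (fun x : ℝ => (|Real.sinh x| + c / Real.cosh x) / ((Real.cosh x - M) ^ 2 + B))
      = fun x => χ |x| := funext habs
  constructor
  · rw [hfun]
    have int_Ioi : IntegrableOn (fun x => χ |x|) (Ioi 0) := by
      apply hχint.congr_fun (fun x hx => ?_) measurableSet_Ioi
      rw [abs_of_pos hx]
    have int_Iic : IntegrableOn (fun x => χ |x|) (Iic 0) := by
      rw [← Measure.map_neg_eq_self (volume : Measure ℝ)]
      have m : MeasurableEmbedding fun x : ℝ => -x := (Homeomorph.neg ℝ).measurableEmbedding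
      rw [m.integrableOn_map_iff]
      simp_rw [Function.comp_def, abs_neg, neg_preimage, neg_Iic, neg_zero]
      exact Iff.mpr integrableOn_Ici_iff_integrableOn_Ioi int_Ioi
    have := int_Iic.union int_Ioi
    rwa [Iic_union_Ioi, integrableOn_univ] at this
  · rw [hfun, integral_comp_abs]
    linarith [hχval]

lemma L1 (d x : ℝ) : ‖Complex.cosh ((x:ℂ) + Complex.I * d)‖
    = Real.sqrt (Real.sinh x ^ 2 + Real.cos d ^ 2) := by
  have e : Complex.cosh ((x:ℂ) + Complex.I * d)
      = ((Real.cosh x * Real.cos d : ℝ) : ℂ)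
        + ((Real.sinh x * Real.sin d : ℝ) : ℂ) * Complex.I := by
    rw [show Complex.I * (d:ℂ) = (d:ℂ) * Complex.I from mul_comm _ _, Complex.cosh_add,
      Complex.cosh_mul_I, Complex.sinh_mul_I]
    push_cast
    ring
  rw [e, Complex.norm_def, Complex.normSq_add_mul_I]
  congr 1
  linear_combination (Real.cos d ^ 2) * Real.cosh_sq x +
    (Real.sinh x ^ 2) * Real.sin_sq_add_cos_sq d

lemma L2 (d x α lam : ℝ) :
    ‖(α : ℂ) + Complex.I * Complex.sinh ((x:ℂ) + Complex.I * d) + lam‖ ^ 2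
    = (Real.cosh x - Real.sin d * (α + lam)) ^ 2 + Real.cos d ^ 2 * ((α + lam) ^ 2 - 1) := by
  have e : (α : ℂ) + Complex.I * Complex.sinh ((x:ℂ) + Complex.I * d) + lam
      = ((α + lam - Real.sin d * Real.cosh x : ℝ) : ℂ)
        + ((Real.cos d * Real.sinh x : ℝ) : ℂ) * Complex.I := by
    rw [show Complex.I * (d:ℂ) = (d:ℂ) * Complex.I from mul_comm _ _, Complex.sinh_add,
      Complex.sinh_mul_I, Complex.cosh_mul_I]
    push_cast
    linear_combination (Complex.cosh (x:ℂ) * Complex.sin (d:ℂ)) * Complex.I_sq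
  rw [e, Complex.sq_norm, Complex.normSq_add_mul_I]
  have h1 : Real.sin d ^ 2 + Real.cos d ^ 2 = 1 := Real.sin_sq_add_cos_sq d
  have h2 : Real.cosh x ^ 2 - Real.sinh x ^ 2 = 1 := Real.cosh_sq_sub_sinh_sq x
  linear_combination (Real.cosh x ^ 2 - (α + lam) ^ 2) * h1 - Real.cos d ^ 2 * h2

lemma num_le {c : ℝ} (hc : 0 < c) (hc1 : c ≤ 1) (x : ℝ) :
    Real.sqrt (Real.sinh x ^ 2 + c ^ 2) ≤ |Real.sinh x| + c / Real.cosh x := by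
  have hch := Real.cosh_pos x
  have habs : |Real.sinh x| ≤ Real.cosh x := by
    nlinarith [Real.cosh_sq x, _root_.sq_abs (Real.sinh x), abs_nonneg (Real.sinh x)]
  have h1 : Real.sinh x ^ 2 + c ^ 2 ≤ (|Real.sinh x| + c / Real.cosh x) ^ 2 := by
    have hexp : (|Real.sinh x| + c / Real.cosh x) ^ 2
        = Real.sinh x ^ 2 + (2 * |Real.sinh x| * (c / Real.cosh x) + (c / Real.cosh x) ^ 2) := by
      rw [add_sq, _root_.sq_abs]; ring
    rw [hexp]
    have hrw : 2 * |Real.sinh x| * (c / Real.cosh x) + (c / Real.cosh x) ^ 2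
        = (2 * |Real.sinh x| * c * Real.cosh x + c ^ 2) / Real.cosh x ^ 2 := by
      field_simp
    have key : c ^ 2 ≤ 2 * |Real.sinh x| * (c / Real.cosh x) + (c / Real.cosh x) ^ 2 := by
      rw [hrw, le_div_iff₀ (by positivity)]
      nlinarith [Real.cosh_sq x, _root_.sq_abs (Real.sinh x), abs_nonneg (Real.sinh x), habs,
        mul_le_mul_of_nonneg_left habs (mul_nonneg hc.le (abs_nonneg (Real.sinh x))),
        mul_le_mul_of_nonneg_right hc1
          (mul_nonneg (abs_nonneg (Real.sinh x)) (abs_nonneg (Real.sinh x)))]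
    linarith
  calc Real.sqrt (Real.sinh x ^ 2 + c ^ 2)
      ≤ Real.sqrt ((|Real.sinh x| + c / Real.cosh x) ^ 2) := Real.sqrt_le_sqrt h1
    _ = |Real.sinh x| + c / Real.cosh x := Real.sqrt_sq (by positivity)

end ContourEstimateAux

open ContourEstimateAux Real in
/-- The contour integral `Θ_{α,λ} = ∫_{∂D_d} |dz| / |α + i z + λ|²`, with the boundary
parametrized by `z = sinh(x ± i d)` (so `|dz| = |cosh(x ± i d)| dx`), is bounded by
`C λ⁻¹ / cos(d)^{3/2}` with `C` independent of `α`, `λ`, and `d`. -/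
theorem contour_integral_estimate :
    ∃ C : ℝ, 0 < C ∧ ∀ (d α lam : ℝ), 0 < d → d < Real.pi / 2 → 1 ≤ α → 1 ≤ lam →
      (∫ x : ℝ, ‖Complex.cosh ((x : ℂ) + Complex.I * d)‖ /
          ‖(α : ℂ) + Complex.I * Complex.sinh ((x : ℂ) + Complex.I * d) + lam‖ ^ 2)
        + (∫ x : ℝ, ‖Complex.cosh ((x : ℂ) - Complex.I * d)‖ /
          ‖(α : ℂ) + Complex.I * Complex.sinh ((x : ℂ) - Complex.I * d) + lam‖ ^ 2)
        ≤ C * lam⁻¹ / Real.cos d ^ ((3 : ℝ) / 2) := by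
  refine ⟨22, by norm_num, ?_⟩
  intro d α lam hd0 hd2 hα hlam
  have hπ := Real.pi_pos
  have hc : 0 < Real.cos d := Real.cos_pos_of_mem_Ioo ⟨by linarith, hd2⟩
  have hc1 : Real.cos d ≤ 1 := Real.cos_le_one d
  have hlam0 : (0:ℝ) < lam := by linarith
  have hA2 : 2 ≤ α + lam := by linarith
  set c := Real.cos d with hcdef
  set s := Real.sin d with hsdef
  set A := α + lam with hAdef
  set B := c ^ 2 * (A ^ 2 - 1) with hBdef
  have hB : 0 < B := by
    have : 0 < A ^ 2 - 1 := by nlinarith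
    positivity
  have hBsq : (c * lam) ^ 2 ≤ B := by
    rw [hBdef]
    have : lam ^ 2 ≤ A ^ 2 - 1 := by nlinarith
    nlinarith [sq_nonneg c, hc]
  have hsB : (0:ℝ) < Real.sqrt B := Real.sqrt_pos.2 hB
  have hsqrtB : c * lam ≤ Real.sqrt B := by
    have h := Real.sqrt_le_sqrt hBsq
    rwa [Real.sqrt_sq (by positivity)] at h
  have hclam : (0:ℝ) < c * lam := by positivity
  -- branch 1
  obtain ⟨hint1, hval1⟩ := branch_est hB hc.le (s * A)
  have hb1 : (∫ x : ℝ, ‖Complex.cosh ((x : ℂ) + Complex.I * d)‖ /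
          ‖(α : ℂ) + Complex.I * Complex.sinh ((x : ℂ) + Complex.I * d) + lam‖ ^ 2)
      ≤ 2 * (π / Real.sqrt B + 2 * c / B) := by
    refine le_trans (integral_mono_of_nonneg ?_ hint1 ?_) hval1
    · filter_upwards with x
      simp only [Pi.zero_apply]
      positivity
    · filter_upwards with x
      rw [L1, L2]
      have hQ : (0:ℝ) < (Real.cosh x - s * A) ^ 2 + B := by positivity
      have hden : (Real.cosh x - Real.sin d * (α + lam)) ^ 2
            + Real.cos d ^ 2 * ((α + lam) ^ 2 - 1)
          = (Real.cosh x - s * A) ^ 2 + B := by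
        rw [← hsdef, ← hcdef, ← hAdef, ← hBdef]
      rw [hden]
      exact div_le_div_of_nonneg_right (num_le hc hc1 x) hQ.le
  -- branch 2
  obtain ⟨hint2, hval2⟩ := branch_est hB hc.le (-(s * A))
  have hb2 : (∫ x : ℝ, ‖Complex.cosh ((x : ℂ) - Complex.I * d)‖ /
          ‖(α : ℂ) + Complex.I * Complex.sinh ((x : ℂ) - Complex.I * d) + lam‖ ^ 2)
      ≤ 2 * (π / Real.sqrt B + 2 * c / B) := by
    refine le_trans (integral_mono_of_nonneg ?_ hint2 ?_) hval2
    · filter_upwards with x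
      simp only [Pi.zero_apply]
      positivity
    · filter_upwards with x
      have hxm : (x:ℂ) - Complex.I * (d:ℂ) = (x:ℂ) + Complex.I * ((-d : ℝ) : ℂ) := by
        push_cast
        ring
      rw [hxm, L1 (-d) x, L2 (-d) x α lam]
      have hQ : (0:ℝ) < (Real.cosh x - -(s * A)) ^ 2 + B := by positivity
      have hnum : Real.sqrt (Real.sinh x ^ 2 + Real.cos (-d) ^ 2)
          = Real.sqrt (Real.sinh x ^ 2 + c ^ 2) := by
        rw [Real.cos_neg, ← hcdef]
      have hden : (Real.cosh x - Real.sin (-d) * (α + lam)) ^ 2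
            + Real.cos (-d) ^ 2 * ((α + lam) ^ 2 - 1)
          = (Real.cosh x - -(s * A)) ^ 2 + B := by
        rw [Real.cos_neg, Real.sin_neg, ← hsdef, ← hcdef, ← hAdef, ← hBdef]
        ring
      rw [hnum, hden]
      exact div_le_div_of_nonneg_right (num_le hc hc1 x) hQ.le
  -- arithmetic
  have e1 : π / Real.sqrt B ≤ π / (c * lam) := by
    gcongr
  have e2 : 2 * c / B ≤ 2 / (c * lam) := by
    have h1 : 2 * c / B ≤ 2 * c / ((c * lam) ^ 2) := by
      gcongr
    have h2 : 2 * c / ((c * lam) ^ 2) = 2 / (c * lam ^ 2) := by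
      field_simp
    have h3 : 2 / (c * lam ^ 2) ≤ 2 / (c * lam) := by
      gcongr
      nlinarith
    linarith [h1, h2.le, h2.ge]
  have hc32 : (0:ℝ) < c ^ ((3:ℝ)/2) := Real.rpow_pos_of_pos hc _
  have hc32le : c ^ ((3:ℝ)/2) ≤ c := by
    have h := Real.rpow_le_rpow_of_exponent_ge hc hc1 (show (1:ℝ) ≤ 3/2 by norm_num)
    rwa [Real.rpow_one] at h
  have hfin : 4 * (π / (c * lam)) + 4 * (2 / (c * lam)) ≤ 22 * lam⁻¹ / c ^ ((3:ℝ)/2) := by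
    have hpi : π < 3.15 := Real.pi_lt_d2
    have step1 : 4 * (π / (c * lam)) + 4 * (2 / (c * lam)) ≤ 22 / (c * lam) := by
      have heq : 4 * (π / (c * lam)) + 4 * (2 / (c * lam)) = (4 * π + 8) / (c * lam) := by
        ring
      rw [heq]
      exact div_le_div_of_nonneg_right (by linarith) hclam.le
    have step2 : (22:ℝ) / (c * lam) = 22 * lam⁻¹ / c := by
      field_simp
    have step3 : (22:ℝ) * lam⁻¹ / c ≤ 22 * lam⁻¹ / c ^ ((3:ℝ)/2) := by
      gcongr
    calc 4 * (π / (c * lam)) + 4 * (2 / (c * lam)) ≤ 22 / (c * lam) := step1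
      _ = 22 * lam⁻¹ / c := step2
      _ ≤ 22 * lam⁻¹ / c ^ ((3:ℝ)/2) := step3
  calc _ ≤ 2 * (π / Real.sqrt B + 2 * c / B) + 2 * (π / Real.sqrt B + 2 * c / B) :=
        add_le_add hb1 hb2
    _ ≤ 4 * (π / (c * lam)) + 4 * (2 / (c * lam)) := by linarith [e1, e2]
    _ ≤ 22 * lam⁻¹ / c ^ ((3:ℝ)/2) := hfin
end
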